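/- arXiv:1212.0915 — 2 statements merged into one kernel-verified Lean document; each statement's English description precedes it below -/
import Mathlib

section
/- Let p ≥ 5 be prime and s an integer with gcd(s(s+1), p) = 1. Define θ(s) as the Legendre symbol of 2s(s+1)(s·q_p(s) - (s+1)·q_p(s+1)) modulo p. Let t be an integer with t·s ≡ 1 (mod p) and gcd(t(t+1), p) = 1. Then θ(t) = θ(s). -/
/-- The Fermat quotient of `u` modulo `p`: the unique integer in `[0, p)`
congruent to `(u^(p-1) - 1)/p` modulo `p`. -/
def fermatQuotient (p : ℕ) (u : ℤ) : ℤ := ((u ^ (p - 1) - 1) / (p : ℤ)) % (p : ℤ)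

/-- `θ_{p,s}`: the Legendre symbol of `2s(s+1)(s·q_p(s) - (s+1)·q_p(s+1))` modulo `p`. -/
def theta (p : ℕ) [Fact p.Prime] (s : ℤ) : ℤ :=
  legendreSym p (2 * s * (s + 1) *
    (s * fermatQuotient p s - (s + 1) * fermatQuotient p (s + 1)))

private lemma binom_aux (n : ℕ) (a c : ℤ) :
    (a+c)^(n+1) ≡ a^(n+1) + (n+1)*a^n*c [ZMOD c^2] := by
  induction n with
  | zero => simp
  | succ n ih =>
    have heq : (a+c)^(n+1+1) = (a+c)^(n+1) * (a+c) := by ring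
    rw [heq]
    calc (a+c)^(n+1) * (a+c) ≡ (a^(n+1) + (n+1)*a^n*c) * (a+c) [ZMOD c^2] := ih.mul_right _
      _ ≡ a^(n+1+1) + (n+1+1)*a^(n+1)*c [ZMOD c^2] := by
          have h2 : (a^(n+1) + ((n:ℤ)+1)*a^n*c) * (a+c)
              = a^(n+1+1) + ((n:ℤ)+1+1)*a^(n+1)*c + ((n:ℤ)+1)*a^n*c^2 := by ring
          rw [h2]
          exact Int.ModEq.symm (Int.modEq_iff_dvd.mpr ⟨((n:ℤ)+1)*a^n, by ring⟩)

private lemma pow_card_sub_two (p : ℕ) [Fact p.Prime] (a : ZMod p) (h : a ≠ 0) :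
    a ^ (p-2) = a⁻¹ := by
  have h2 : 2 ≤ p := (Fact.out : p.Prime).two_le
  have h1 : a ^ (p-2) * a = 1 := by
    rw [← pow_succ]
    have : p - 2 + 1 = p - 1 := by omega
    rw [this, ZMod.pow_card_sub_one_eq_one h]
  exact eq_inv_of_mul_eq_one_left h1

private lemma fq_cast (p : ℕ) [Fact p.Prime] (u : ℤ) :
    ((fermatQuotient p u : ℤ) : ZMod p) = (((u^(p-1)-1)/(p:ℤ) : ℤ) : ZMod p) := by
  unfold fermatQuotient
  exact ZMod.intCast_mod _ p

private lemma div_exact (p : ℕ) [Fact p.Prime] (u : ℤ) (hu : (u : ZMod p) ≠ 0) :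
    (p:ℤ) * ((u^(p-1)-1)/(p:ℤ)) = u^(p-1)-1 := by
  refine Int.mul_ediv_cancel' ?_
  rw [← ZMod.intCast_zmod_eq_zero_iff_dvd]
  push_cast
  rw [ZMod.pow_card_sub_one_eq_one hu]
  ring

private lemma fq_mul (p : ℕ) [Fact p.Prime] (u v : ℤ) (hu : (u : ZMod p) ≠ 0)
    (hv : (v : ZMod p) ≠ 0) :
    ((fermatQuotient p (u*v) : ℤ) : ZMod p) = (fermatQuotient p u : ZMod p)
      + (fermatQuotient p v : ZMod p) := by
  have hp0 : (p:ℤ) ≠ 0 := by exact_mod_cast (Fact.out : p.Prime).ne_zero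
  have huv : ((u*v : ℤ) : ZMod p) ≠ 0 := by push_cast; exact mul_ne_zero hu hv
  have key : ((u*v)^(p-1)-1)/(p:ℤ)
      = ((u^(p-1)-1)/(p:ℤ)) * v^(p-1) + ((v^(p-1)-1)/(p:ℤ)) := by
    apply mul_left_cancel₀ hp0
    rw [div_exact p _ huv, mul_add, ← mul_assoc, div_exact p u hu, div_exact p v hv]
    ring
  rw [fq_cast, fq_cast, fq_cast, key]
  push_cast
  rw [ZMod.pow_card_sub_one_eq_one hv]
  ring

private lemma fq_shift (p : ℕ) [Fact p.Prime] (a m : ℤ) (ha : (a : ZMod p) ≠ 0) :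
    ((fermatQuotient p (a + p*m) : ℤ) : ZMod p)
      = (fermatQuotient p a : ZMod p) - m * (a : ZMod p)⁻¹ := by
  have hp : p.Prime := Fact.out
  have h2 : 2 ≤ p := hp.two_le
  have hp0 : (p:ℤ) ≠ 0 := by exact_mod_cast hp.ne_zero
  have ha' : ((a + p*m : ℤ) : ZMod p) ≠ 0 := by
    push_cast
    simpa using ha
  have hb := binom_aux (p-2) a ((p:ℤ)*m)
  have hexp : p - 2 + 1 = p - 1 := by omega
  rw [hexp] at hb
  have hcoef : ((p-2 : ℕ) : ℤ) + 1 = (p:ℤ) - 1 := by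
    have : ((p-2 : ℕ) : ℤ) = (p:ℤ) - 2 := by
      omega
    rw [this]; ring
  rw [hcoef] at hb
  -- reduce modulus to p^2
  have hb2 : (a + (p:ℤ)*m)^(p-1) ≡ a^(p-1) + ((p:ℤ)-1)*a^(p-2)*((p:ℤ)*m) [ZMOD (p:ℤ)^2] :=
    hb.of_dvd ⟨m^2, by ring⟩
  obtain ⟨d, hd⟩ := Int.ModEq.dvd hb2
  -- hd : a^(p-1) + (p-1)*a^(p-2)*(p*m) - (a+p*m)^(p-1) = p^2 * d
  have e1 := div_exact p (a + (p:ℤ)*m) ha'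
  have e2 := div_exact p a ha
  set C1 := ((a + (p:ℤ)*m)^(p-1)-1)/(p:ℤ) with hC1
  set C2 := (a^(p-1)-1)/(p:ℤ) with hC2
  have key : C1 = C2 + ((p:ℤ)-1)*a^(p-2)*m - (p:ℤ)*d := by
    apply mul_left_cancel₀ hp0
    rw [e1]
    have : (p:ℤ) * (C2 + ((p:ℤ)-1)*a^(p-2)*m - (p:ℤ)*d)
        = ((p:ℤ)*C2) + ((p:ℤ)-1)*a^(p-2)*((p:ℤ)*m) - (p:ℤ)^2*d := by ring
    rw [this, e2]
    linarith [hd]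
  rw [fq_cast, fq_cast, ← hC1, ← hC2, key]
  push_cast
  rw [pow_card_sub_two p _ ha]
  simp [ZMod.natCast_self]
  ring

theorem theta_inv (p : ℕ) [Fact p.Prime] (hp : 5 ≤ p) (s t : ℤ)
    (hs : Int.gcd (s * (s + 1)) (p : ℤ) = 1)
    (ht : Int.gcd (t * (t + 1)) (p : ℤ) = 1)
    (hts : t * s ≡ 1 [ZMOD (p : ℤ)]) :
    theta p t = theta p s := by
  have hpp : p.Prime := Fact.out
  -- nonvanishing facts
  have hcop : ∀ u : ℤ, Int.gcd (u * (u + 1)) (p : ℤ) = 1 →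
      (u : ZMod p) ≠ 0 ∧ ((u : ZMod p) + 1) ≠ 0 := by
    intro u hu
    have hnd : ¬ ((u : ZMod p) * ((u : ZMod p) + 1) = 0) := by
      intro h
      have : (p:ℤ) ∣ u * (u + 1) := by
        rw [← ZMod.intCast_zmod_eq_zero_iff_dvd]
        push_cast
        exact h
      have hd : (p:ℤ) ∣ (Int.gcd (u * (u+1)) (p:ℤ) : ℤ) := Int.dvd_coe_gcd this dvd_rfl
      rw [hu] at hd
      have := Int.le_of_dvd one_pos hd
      omega
    exact ⟨fun h => hnd (by rw [h]; ring), fun h => hnd (by rw [h]; ring)⟩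
  obtain ⟨hS, hS1⟩ := hcop s hs
  obtain ⟨hT, hT1⟩ := hcop t ht
  -- k such that t*s = 1 + p*k
  obtain ⟨k, hk⟩ : ∃ k : ℤ, t * s = 1 + (p:ℤ) * k := by
    obtain ⟨k, hk⟩ := Int.ModEq.dvd hts
    exact ⟨-k, by linarith⟩
  -- abbreviations in ZMod p
  set S : ZMod p := (s : ZMod p)
  set T : ZMod p := (t : ZMod p)
  have hTS : T * S = 1 := by
    have h : ((t*s : ℤ) : ZMod p) = ((1:ℤ) : ZMod p) :=
      (ZMod.intCast_eq_intCast_iff' _ _ _).mpr hts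
    push_cast at h
    exact h
  have hTinv : T = S⁻¹ := eq_inv_of_mul_eq_one_left hTS
  set Qs : ZMod p := ((fermatQuotient p s : ℤ) : ZMod p)
  set Qs1 : ZMod p := ((fermatQuotient p (s+1) : ℤ) : ZMod p)
  set Qt : ZMod p := ((fermatQuotient p t : ℤ) : ZMod p)
  set Qt1 : ZMod p := ((fermatQuotient p (t+1) : ℤ) : ZMod p)
  -- fermatQuotient p 1 = 0
  have hq1 : fermatQuotient p 1 = 0 := by
    unfold fermatQuotient
    simp
  -- Qt = -k - Qs
  have hQt : Qt = -(k : ZMod p) - Qs := by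
    have h1 : ((fermatQuotient p (t*s) : ℤ) : ZMod p) = Qt + Qs := fq_mul p t s hT hS
    have h2 : ((fermatQuotient p (t*s) : ℤ) : ZMod p) = -(k : ZMod p) := by
      rw [hk]
      have := fq_shift p 1 k (by simp : ((1:ℤ) : ZMod p) ≠ 0)
      rw [hq1] at this
      simpa using this
    rw [h2] at h1
    linear_combination -h1
  -- Qt1 via s*(t+1) = (s+1) + p*k
  have hQt1 : Qs + Qt1 = Qs1 - (k : ZMod p) * (S+1)⁻¹ := by
    have heq : s * (t+1) = (s+1) + (p:ℤ)*k := by rw [mul_add, mul_comm s t]; linarith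
    have h1 : ((fermatQuotient p (s*(t+1)) : ℤ) : ZMod p) = Qs + Qt1 := by
      have := fq_mul p s (t+1) hS (by push_cast; exact hT1)
      rw [this]
    have h2 := fq_shift p (s+1) k (by push_cast; exact hS1)
    rw [heq] at h1
    rw [h1] at h2
    rw [h2]
    push_cast
    ring
  -- the key congruence
  have hkey : ((2 * t * (t + 1) * (t * fermatQuotient p t - (t + 1) * fermatQuotient p (t + 1))
        * s^4 : ℤ) : ZMod p)
      = ((2 * s * (s + 1) * (s * fermatQuotient p s - (s + 1) * fermatQuotient p (s + 1)) : ℤ)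
        : ZMod p) := by
    push_cast
    have hQt1' : Qt1 = Qs1 - Qs - (k : ZMod p) * (S+1)⁻¹ := by
      linear_combination hQt1
    show 2 * T * (T + 1) * (T * Qt - (T + 1) * Qt1) * S^4
        = 2 * S * (S + 1) * (S * Qs - (S + 1) * Qs1)
    rw [hQt, hQt1', hTinv]
    field_simp
    ring
  -- conclude via Legendre symbols
  unfold theta
  have hmul := legendreSym.mul p
    (2 * t * (t + 1) * (t * fermatQuotient p t - (t + 1) * fermatQuotient p (t + 1))) (s^4)
  have hsq : legendreSym p (s^4) = 1 := by
    have : (s:ℤ)^4 = (s^2)^2 := by ring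
    rw [this]
    exact legendreSym.sq_one' (p := p) (by push_cast; exact pow_ne_zero 2 hS)
  have hcongr : legendreSym p
      (2 * t * (t + 1) * (t * fermatQuotient p t - (t + 1) * fermatQuotient p (t + 1)) * s^4)
      = legendreSym p
      (2 * s * (s + 1) * (s * fermatQuotient p s - (s + 1) * fermatQuotient p (s + 1))) := by
    simp only [legendreSym]
    congr 1
  rw [hmul, hsq, mul_one] at hcongr
  exact hcongr
end

section
/- For a prime p, (s^p - (s+1)^p + 1)/p ≡ f(s+1) (mod p) for 1 ≤ s ≤ p-2, where f(u) = Σ_{j=1}^{p-1} u^j · j^{-1} in Z/pZ. -/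
/-- `f(u) = ∑_{j=1}^{p-1} u^j / j` computed in `ZMod p`. -/
def fsum (p : ℕ) (u : ZMod p) : ZMod p :=
  ∑ j ∈ Finset.Icc 1 (p - 1), u ^ j * (j : ZMod p)⁻¹

lemma choose_sub_one_cast (p : ℕ) (hp : p.Prime) :
    ∀ k, k ≤ p - 1 → ((Nat.choose (p - 1) k : ZMod p)) = (-1) ^ k := by
  intro k
  induction k with
  | zero => intro _; simp
  | succ k ih =>
    intro hk
    have hp2 := hp.two_le
    have hk' : k ≤ p - 1 := by omega
    have hkp : k + 1 < p := by omega
    have hP : Nat.choose p (k + 1) = Nat.choose (p - 1) k + Nat.choose (p - 1) (k + 1) := by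
      have h := Nat.choose_succ_succ (p - 1) k
      have hpp : p - 1 + 1 = p := by omega
      rw [Nat.succ_eq_add_one, Nat.succ_eq_add_one, hpp] at h
      exact h
    have h0 : ((Nat.choose p (k + 1) : ℕ) : ZMod p) = 0 := by
      rw [ZMod.natCast_eq_zero_iff]
      exact Nat.Prime.dvd_choose_self hp (by omega) hkp
    have hthis := congrArg (fun n : ℕ => (n : ZMod p)) hP
    simp only [Nat.cast_add] at hthis
    rw [h0, ih hk'] at hthis
    have h2 : ((Nat.choose (p - 1) (k + 1) : ℕ) : ZMod p) = -(-1) ^ k := by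
      linear_combination -hthis
    rw [h2, pow_succ]
    ring

lemma choose_div_p_cast (p : ℕ) (hp : p.Prime) (i : ℕ) (hi : i < p - 1) :
    ((Nat.choose p (i + 1) / p : ℕ) : ZMod p) = (-1) ^ i * ((i + 1 : ℕ) : ZMod p)⁻¹ := by
  haveI : Fact p.Prime := ⟨hp⟩
  have hp2 := hp.two_le
  have hdvd : p ∣ Nat.choose p (i + 1) := Nat.Prime.dvd_choose_self hp (by omega) (by omega)
  obtain ⟨m, hm⟩ := hdvd
  have hdiv : Nat.choose p (i + 1) / p = m := by
    rw [hm, Nat.mul_div_cancel_left _ (by omega : 0 < p)]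
  have hkey : p * Nat.choose (p - 1) i = Nat.choose p (i + 1) * (i + 1) := by
    have h := Nat.add_one_mul_choose_eq (p - 1) i
    have hpp : p - 1 + 1 = p := by omega
    rw [hpp] at h
    exact h
  have hmk : Nat.choose (p - 1) i = m * (i + 1) := by
    have : p * Nat.choose (p - 1) i = p * (m * (i + 1)) := by rw [hkey, hm]; ring
    exact Nat.eq_of_mul_eq_mul_left (by omega) this
  have hcast : ((Nat.choose (p - 1) i : ℕ) : ZMod p) = (-1) ^ i :=
    choose_sub_one_cast p hp i (by omega)
  have hne : ((i + 1 : ℕ) : ZMod p) ≠ 0 := by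
    rw [Ne, ZMod.natCast_eq_zero_iff]
    intro h
    have := Nat.le_of_dvd (by omega) h
    omega
  have hthis := congrArg (fun n : ℕ => (n : ZMod p)) hmk
  simp only [Nat.cast_mul] at hthis
  rw [hcast] at hthis
  rw [hdiv]
  refine (eq_mul_inv_iff_mul_eq₀ hne).mpr hthis.symm

theorem heathBrown_identity (p : ℕ) (hp : p.Prime) (s : ℕ)
    (h1 : 1 ≤ s) (h2 : s ≤ p - 2) :
    ((((s : ℤ) ^ p - ((s : ℤ) + 1) ^ p + 1) / (p : ℤ) : ℤ) : ZMod p) =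
      fsum p ((s : ZMod p) + 1) := by
  have hp2 := hp.two_le
  have hp3 : 3 ≤ p := by omega
  have hodd : Odd p := hp.odd_of_ne_two (by omega)
  haveI : Fact p.Prime := ⟨hp⟩
  set u : ℤ := (s : ℤ) + 1 with hu
  have hexp : (s : ℤ) ^ p = ∑ k ∈ Finset.range (p + 1),
      u ^ k * (-1 : ℤ) ^ (p - k) * (p.choose k) := by
    have : (s : ℤ) = u + (-1) := by rw [hu]; ring
    rw [this, add_pow]
  have hkey : (s : ℤ) ^ p - u ^ p + 1 =
      p * ∑ i ∈ Finset.range (p - 1),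
        u ^ (i + 1) * (-1 : ℤ) ^ (p - (i + 1)) * ((p.choose (i + 1) / p : ℕ) : ℤ) := by
    rw [hexp, Finset.sum_range_succ]
    have hpp : p - 1 + 1 = p := by omega
    have hsplit := Finset.sum_range_succ'
      (fun k => u ^ k * (-1 : ℤ) ^ (p - k) * (p.choose k : ℤ)) (p - 1)
    rw [hpp] at hsplit
    rw [hsplit, Finset.mul_sum]
    have hterm : ∀ i ∈ Finset.range (p - 1),
        u ^ (i + 1) * (-1 : ℤ) ^ (p - (i + 1)) * (p.choose (i + 1) : ℤ) =
        (p : ℤ) * (u ^ (i + 1) * (-1 : ℤ) ^ (p - (i + 1)) * ((p.choose (i + 1) / p : ℕ) : ℤ)) := by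
      intro i hi
      simp only [Finset.mem_range] at hi
      have hdvd : p ∣ p.choose (i + 1) := Nat.Prime.dvd_choose_self hp (by omega) (by omega)
      have : (p.choose (i + 1) : ℤ) = (p : ℤ) * ((p.choose (i + 1) / p : ℕ) : ℤ) := by
        rw [← Nat.cast_mul, Nat.mul_div_cancel' hdvd]
      rw [this]; ring
    rw [← Finset.sum_congr rfl hterm]
    have h0 : u ^ 0 * (-1 : ℤ) ^ (p - 0) * (p.choose 0 : ℤ) = -1 := by
      simp [hodd.neg_one_pow]
    have hps : u ^ p * (-1 : ℤ) ^ (p - p) * (p.choose p : ℤ) = u ^ p := by simp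
    rw [h0, hps]
    ring
  have hdiv : ((s : ℤ) ^ p - u ^ p + 1) / (p : ℤ) =
      ∑ i ∈ Finset.range (p - 1),
        u ^ (i + 1) * (-1 : ℤ) ^ (p - (i + 1)) * ((p.choose (i + 1) / p : ℕ) : ℤ) := by
    rw [hkey, Int.mul_ediv_cancel_left _ (by exact_mod_cast hp.pos.ne')]
  rw [hdiv]
  have hIcc : Finset.Icc 1 (p - 1) = Finset.Ico 1 p := by
    rw [← Finset.Ico_add_one_right_eq_Icc]
    congr 1
    omega
  rw [Int.cast_sum, fsum, hIcc, Finset.sum_Ico_eq_sum_range]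
  apply Finset.sum_congr rfl
  intro i hi
  simp only [Finset.mem_range] at hi
  have hq := choose_div_p_cast p hp i hi
  simp only [Int.cast_mul, Int.cast_pow, Int.cast_neg, Int.cast_one, Int.cast_natCast,
    Int.cast_add, hu]
  rw [hq]
  have hsign : (-1 : ZMod p) ^ (p - (i + 1)) * (-1 : ZMod p) ^ i = 1 := by
    rw [← pow_add]
    have he : p - (i + 1) + i = p - 1 := by omega
    rw [he]
    exact (Nat.Odd.sub_odd hodd odd_one).neg_one_pow
  have h1i : 1 + i = i + 1 := by omega
  rw [h1i]
  push_cast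
  linear_combination ((s : ZMod p) + 1) ^ (i + 1) * ((i : ZMod p) + 1)⁻¹ * hsign
end
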